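/- Assume ∫_{(0,1]} z^{1+α/d} λ(dz) < ∞ and ∫_{(1,∞)} z^{d/(d+α)} λ(dz) < ∞, and assume that either (a) ∫_{(1,∞)} z^{1+α/d} λ(dz) < ∞, or (b) there exist constants δ > d/(d+α), c > 0 and M > 0 such that λ̄(ry) ≤ c y^{-δ} λ̄(r) for all r > M and y > M. Then η̄₀(r) ≍ η̄(r) as r → ∞. -/

import Mathlib

open MeasureTheory Set Filter Topology
open scoped ENNReal NNReal

/-- The heat-kernel profile `p_s(y) = s^{-d/α} g(|y|/s^{1/α})`. -/
noncomputable def pker (d : ℕ) (α : ℝ) (g : ℝ → ℝ) (s : ℝ)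
    (y : EuclideanSpace ℝ (Fin d)) : ℝ :=
  s ^ (-((d : ℝ) / α)) * g (‖y‖ / s ^ ((1 : ℝ) / α))

/-- `etaBar d α t g lam r = η̄(r)`, where
`η(B) = (Leb_(0,t] ⊗ Leb_{ℝ^d} ⊗ λ)({(s,y,z) : p_s(y)·z ∈ B})` and `η̄(r) = η((r,∞))`. -/
noncomputable def etaBar (d : ℕ) (α t : ℝ) (g : ℝ → ℝ) (lam : MeasureTheory.Measure ℝ)
    (r : ℝ) : ℝ≥0∞ :=
  ((MeasureTheory.volume.restrict (Set.Ioc (0:ℝ) t)).prod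
      ((MeasureTheory.volume : MeasureTheory.Measure (EuclideanSpace ℝ (Fin d))).prod
        (lam.restrict (Set.Ioi (0:ℝ)))))
    {q : ℝ × EuclideanSpace ℝ (Fin d) × ℝ | r < pker d α g q.1 q.2.1 * q.2.2}

/-- `etaZeroBar d α t g lam r = η̄₀(r)`, where
`η₀(B) = (Leb_(0,t] ⊗ Leb_{ℝ^d} ⊗ λ)({(s,y,z) : |y| ≤ 1/2, p_s(y)·z ∈ B ∩ (e_{d,α},∞)})`,
`e_{d,α} = 1` if `d < α` and `e_{d,α} = 0` if `d ≥ α`, and `η̄₀(r) = η₀((r,∞))`. -/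
noncomputable def etaZeroBar (d : ℕ) (α t : ℝ) (g : ℝ → ℝ) (lam : MeasureTheory.Measure ℝ)
    (r : ℝ) : ℝ≥0∞ :=
  ((MeasureTheory.volume.restrict (Set.Ioc (0:ℝ) t)).prod
      ((MeasureTheory.volume : MeasureTheory.Measure (EuclideanSpace ℝ (Fin d))).prod
        (lam.restrict (Set.Ioi (0:ℝ)))))
    {q : ℝ × EuclideanSpace ℝ (Fin d) × ℝ |
      ‖q.2.1‖ ≤ 1 / 2 ∧
        max r (if (d:ℝ) < α then 1 else 0) < pker d α g q.1 q.2.1 * q.2.2}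


private lemma exists_Cg {d : ℕ} {α c₀ : ℝ} {g : ℝ → ℝ} (hα0 : 0 < α)
    (hg_anti : StrictAntiOn g (Set.Ici 0)) (hg_pos : ∀ x : ℝ, 0 ≤ x → 0 < g x)
    (hc₀ : 0 < c₀)
    (hg_tail : Filter.Tendsto (fun r : ℝ => r ^ ((d:ℝ) + α) * g r) Filter.atTop (nhds c₀)) :
    ∃ Cg : ℝ, 0 < Cg ∧ ∀ x : ℝ, 0 < x → g x ≤ Cg * x ^ (-((d:ℝ) + α)) := by
  set D : ℝ := (d : ℝ)
  have hp : 0 < D + α := by positivity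
  have h := hg_tail.eventually (eventually_le_nhds (lt_add_one c₀))
  obtain ⟨a, ha⟩ := Filter.eventually_atTop.mp h
  set x₀ : ℝ := max a 1 with hx₀def
  have hx₀1 : (1:ℝ) ≤ x₀ := le_max_right a 1
  have hx₀0 : (0:ℝ) < x₀ := lt_of_lt_of_le one_pos hx₀1
  refine ⟨max (c₀ + 1) (g 0 * x₀ ^ (D + α)), lt_max_of_lt_left (by linarith), fun x hx => ?_⟩
  have hxp : (0:ℝ) < x ^ (D + α) := Real.rpow_pos_of_pos hx _
  rw [Real.rpow_neg hx.le, ← div_eq_mul_inv, le_div_iff₀ hxp]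
  rcases le_or_gt x₀ x with hcase | hcase
  · have h1 : x ^ (D + α) * g x ≤ c₀ + 1 := ha x (le_trans (le_max_left a 1) hcase)
    calc g x * x ^ (D + α) = x ^ (D + α) * g x := by ring
    _ ≤ c₀ + 1 := h1
    _ ≤ _ := le_max_left _ _
  · have hgx : g x < g 0 := hg_anti (Set.self_mem_Ici) hx.le hx
    have h2 : x ^ (D + α) ≤ x₀ ^ (D + α) := Real.rpow_le_rpow hx.le hcase.le hp.le
    have hg0 : 0 < g 0 := hg_pos 0 le_rfl
    calc g x * x ^ (D + α) ≤ g 0 * x₀ ^ (D + α) := by nlinarith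
    _ ≤ _ := le_max_right _ _

private lemma tail_ne_top {lam : Measure ℝ}
    (hmom : ∫⁻ z in Set.Ioi (0:ℝ), ENNReal.ofReal (min 1 (z ^ 2)) ∂lam ≠ ⊤)
    {R : ℝ} (hR : 0 < R) : lam (Set.Ioi R) ≠ ⊤ := by
  intro htop
  apply hmom
  rw [eq_top_iff]
  have h1 : ENNReal.ofReal (min 1 (R ^ 2)) * lam (Set.Ioi R)
      ≤ ∫⁻ z in Set.Ioi R, ENNReal.ofReal (min 1 (z ^ 2)) ∂lam := by
    rw [← MeasureTheory.setLIntegral_const]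
    refine MeasureTheory.setLIntegral_mono (by fun_prop) (fun z hz => ?_)
    refine ENNReal.ofReal_le_ofReal (min_le_min le_rfl ?_)
    have : R < z := hz
    nlinarith
  refine le_trans ?_ (le_trans h1 (lintegral_mono_set (Set.Ioi_subset_Ioi hR.le)))
  have hne : ENNReal.ofReal (min 1 (R ^ 2)) ≠ 0 :=
    (ENNReal.ofReal_pos.2 (lt_min one_pos (by positivity))).ne'
  rw [htop, ENNReal.mul_top hne]


private lemma measure_eq_box (d : ℕ) (t : ℝ) (lam : Measure ℝ) [SigmaFinite lam]
    (S : Set (ℝ × EuclideanSpace ℝ (Fin d) × ℝ)) :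
    ((MeasureTheory.volume.restrict (Set.Ioc (0:ℝ) t)).prod
      ((MeasureTheory.volume : Measure (EuclideanSpace ℝ (Fin d))).prod
        (lam.restrict (Set.Ioi (0:ℝ))))) S
    = ((MeasureTheory.volume.prod
        ((MeasureTheory.volume : Measure (EuclideanSpace ℝ (Fin d))).prod lam)))
        (S ∩ (Set.Ioc (0:ℝ) t ×ˢ ((Set.univ : Set (EuclideanSpace ℝ (Fin d))) ×ˢ Set.Ioi (0:ℝ)))) := by
  have h1 : (MeasureTheory.volume : Measure (EuclideanSpace ℝ (Fin d))).prod
      (lam.restrict (Set.Ioi (0:ℝ)))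
      = ((MeasureTheory.volume : Measure (EuclideanSpace ℝ (Fin d))).prod lam).restrict
        ((Set.univ : Set (EuclideanSpace ℝ (Fin d))) ×ˢ Set.Ioi (0:ℝ)) := by
    rw [← Measure.prod_restrict, Measure.restrict_univ]
  rw [h1, Measure.prod_restrict, Measure.restrict_apply']
  exact (measurableSet_Ioc.prod (MeasurableSet.univ.prod measurableSet_Ioi))

private lemma contOn_F (d : ℕ) {α : ℝ} (hα0 : 0 < α) {g : ℝ → ℝ}
    (hg_cont : ContinuousOn g (Set.Ici 0)) :
    ContinuousOn (fun q : ℝ × EuclideanSpace ℝ (Fin d) × ℝ => pker d α g q.1 q.2.1 * q.2.2)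
      {q : ℝ × EuclideanSpace ℝ (Fin d) × ℝ | 0 < q.1} := by
  have c1 : ContinuousOn (fun q : ℝ × EuclideanSpace ℝ (Fin d) × ℝ =>
      q.1 ^ (-((d : ℝ) / α))) {q | 0 < q.1} :=
    continuous_fst.continuousOn.rpow_const (fun q hq => Or.inl (ne_of_gt hq))
  have c2 : ContinuousOn (fun q : ℝ × EuclideanSpace ℝ (Fin d) × ℝ =>
      ‖q.2.1‖ / q.1 ^ ((1:ℝ) / α)) {q | 0 < q.1} := by
    refine ContinuousOn.div (continuous_snd.fst.norm.continuousOn)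
      (continuous_fst.continuousOn.rpow_const (fun q hq => Or.inl (ne_of_gt hq)))
      (fun q hq => (Real.rpow_pos_of_pos hq _).ne')
  have c3 : ContinuousOn (fun q : ℝ × EuclideanSpace ℝ (Fin d) × ℝ =>
      g (‖q.2.1‖ / q.1 ^ ((1:ℝ) / α))) {q | 0 < q.1} := by
    refine hg_cont.comp c2 (fun q hq => ?_)
    exact div_nonneg (norm_nonneg _) (Real.rpow_pos_of_pos hq _).le
  exact (c1.mul c3).mul continuous_snd.snd.continuousOn

private lemma mble_box (d : ℕ) (t : ℝ) :
    MeasurableSet ((Set.Ioc (0:ℝ) t) ×ˢ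
      ((Set.univ : Set (EuclideanSpace ℝ (Fin d))) ×ˢ Set.Ioi (0:ℝ))) :=
  measurableSet_Ioc.prod (MeasurableSet.univ.prod measurableSet_Ioi)

private lemma mble_SF (d : ℕ) {α t : ℝ} (hα0 : 0 < α) {g : ℝ → ℝ}
    (hg_cont : ContinuousOn g (Set.Ici 0)) (r : ℝ) :
    MeasurableSet ({q : ℝ × EuclideanSpace ℝ (Fin d) × ℝ | r < pker d α g q.1 q.2.1 * q.2.2}
      ∩ (Set.Ioc (0:ℝ) t ×ˢ ((Set.univ : Set (EuclideanSpace ℝ (Fin d))) ×ˢ Set.Ioi (0:ℝ)))) := by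
  have h := (contOn_F d hα0 hg_cont).isOpen_inter_preimage
    (isOpen_lt continuous_const continuous_fst) isOpen_Ioi (t := Set.Ioi r)
  have heq : {q : ℝ × EuclideanSpace ℝ (Fin d) × ℝ | r < pker d α g q.1 q.2.1 * q.2.2}
      ∩ (Set.Ioc (0:ℝ) t ×ˢ ((Set.univ : Set (EuclideanSpace ℝ (Fin d))) ×ˢ Set.Ioi (0:ℝ)))
      = ({q : ℝ × EuclideanSpace ℝ (Fin d) × ℝ | 0 < q.1} ∩
          ((fun q : ℝ × EuclideanSpace ℝ (Fin d) × ℝ => pker d α g q.1 q.2.1 * q.2.2) ⁻¹'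
            Set.Ioi r))
        ∩ (Set.Ioc (0:ℝ) t ×ˢ ((Set.univ : Set (EuclideanSpace ℝ (Fin d))) ×ˢ Set.Ioi (0:ℝ))) := by
    ext q
    simp only [Set.mem_inter_iff, Set.mem_setOf_eq, Set.mem_preimage, Set.mem_Ioi,
      Set.mem_prod, Set.mem_Ioc, Set.mem_univ, true_and]
    tauto
  rw [heq]
  exact h.measurableSet.inter (mble_box d t)


private lemma key_arith {d : ℕ} {α t r Cg s z : ℝ} (hα0 : 0 < α)
    {g : ℝ → ℝ} (hCg : ∀ x : ℝ, 0 < x → g x ≤ Cg * x ^ (-((d:ℝ) + α)))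
    (hCg0 : 0 < Cg) (ht : 0 < t) (hr : 0 < r)
    {y : EuclideanSpace ℝ (Fin d)}
    (hs0 : 0 < s) (hst : s ≤ t) (hz : 0 < z) (hy : 0 < ‖y‖)
    (hf : r < pker d α g s y * z) :
    ‖y‖ ^ ((d:ℝ) + α) < Cg * z * t / r := by
  set D : ℝ := (d : ℝ) with hD
  have hDα : 0 < D + α := by positivity
  set S1 : ℝ := s ^ ((1:ℝ)/α) with hS1def
  have hS1 : 0 < S1 := Real.rpow_pos_of_pos hs0 _
  set x : ℝ := ‖y‖ / S1 with hxdef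
  have hx : 0 < x := div_pos hy hS1
  set a : ℝ := x ^ (D + α) with hadef
  have ha : 0 < a := Real.rpow_pos_of_pos hx _
  set b : ℝ := s ^ (D / α) with hbdef
  have hb : 0 < b := Real.rpow_pos_of_pos hs0 _
  have hgx : g x ≤ Cg * a⁻¹ := by
    have := hCg x hx
    rwa [Real.rpow_neg hx.le] at this
  have hbinv : s ^ (-(D / α)) = b⁻¹ := by rw [Real.rpow_neg hs0.le]
  have hf' : r < b⁻¹ * (Cg * a⁻¹) * z := by
    have h1 : pker d α g s y * z ≤ b⁻¹ * (Cg * a⁻¹) * z := by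
      unfold pker
      rw [← hD, hbinv, ← hS1def, ← hxdef]
      have hga : (0:ℝ) ≤ b⁻¹ := by positivity
      exact mul_le_mul_of_nonneg_right (mul_le_mul_of_nonneg_left hgx hga) hz.le
    linarith
  have h3 : r * (a * b) < Cg * z := by
    have heq : b⁻¹ * (Cg * a⁻¹) * z = Cg * z / (a * b) := by
      field_simp
    rw [heq, lt_div_iff₀ (mul_pos ha hb)] at hf'
    linarith
  have h4 : ‖y‖ ^ (D + α) = a * (b * s) := by
    have hyx : ‖y‖ = x * S1 := by
      rw [hxdef]; field_simp
    rw [hyx, Real.mul_rpow hx.le hS1.le, hS1def, ← Real.rpow_mul hs0.le]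
    have hexp : (1/α) * (D + α) = D/α + 1 := by field_simp
    rw [hexp, Real.rpow_add hs0, Real.rpow_one, hbdef]
  rw [h4, lt_div_iff₀ hr]
  nlinarith [mul_lt_mul_of_pos_right h3 hs0, mul_pos (mul_pos hCg0 hz) hs0, hst,
    mul_le_mul_of_nonneg_left hst (mul_pos hCg0 hz).le]

private lemma J_bound_a {lam : Measure ℝ} {β γ : ℝ} (hβγ : β ≤ γ)
    {R : ℝ} (hR : 1 ≤ R) :
    ∫⁻ z in Set.Ioi R, ENNReal.ofReal (z ^ β) ∂lam
    ≤ ENNReal.ofReal (R ^ (β - γ)) * ∫⁻ z in Set.Ioi (1:ℝ), ENNReal.ofReal (z ^ γ) ∂lam := by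
  have hR0 : (0:ℝ) < R := lt_of_lt_of_le one_pos hR
  calc ∫⁻ z in Set.Ioi R, ENNReal.ofReal (z ^ β) ∂lam
      ≤ ∫⁻ z in Set.Ioi R, ENNReal.ofReal (R ^ (β - γ) * z ^ γ) ∂lam := by
        refine setLIntegral_mono (by fun_prop) (fun z hz => ?_)
        have hz0 : (0:ℝ) < z := lt_trans hR0 hz
        refine ENNReal.ofReal_le_ofReal ?_
        have h1 : z ^ β = z ^ (β - γ) * z ^ γ := by
          rw [← Real.rpow_add hz0]; ring_nf
        rw [h1]
        have h2 : z ^ (β - γ) ≤ R ^ (β - γ) :=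
          Real.rpow_le_rpow_of_nonpos hR0 (le_of_lt hz) (by linarith)
        exact mul_le_mul_of_nonneg_right h2 (Real.rpow_nonneg hz0.le _)
    _ = ENNReal.ofReal (R ^ (β - γ)) * ∫⁻ z in Set.Ioi R, ENNReal.ofReal (z ^ γ) ∂lam := by
        simp_rw [ENNReal.ofReal_mul (Real.rpow_nonneg hR0.le _)]
        rw [lintegral_const_mul' _ _ ENNReal.ofReal_ne_top]
    _ ≤ _ :=
        mul_le_mul_right (lintegral_mono_set (Set.Ioi_subset_Ioi hR)) _

private lemma J_bound_b {lam : Measure ℝ} [SigmaFinite lam]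
    (hfin : ∀ x : ℝ, 0 < x → lam (Set.Ioi x) ≠ ⊤)
    {β δ c M : ℝ} (hβ0 : 0 < β) (hβδ : β < δ) (hc : 0 < c) (hM : 0 < M)
    (hb : ∀ r y : ℝ, M < r → M < y →
      (lam (Set.Ioi (r * y))).toReal ≤ c * y ^ (-δ) * (lam (Set.Ioi r)).toReal)
    {R : ℝ} (hR : max M 1 < R) :
    ∫⁻ z in Set.Ioi R, ENNReal.ofReal (z ^ β) ∂lam
    ≤ ENNReal.ofReal ((1 + (max c ((max M 1) ^ δ)) / (δ/β - 1)) * R ^ β)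
        * lam (Set.Ioi R) := by
  have hR1 : (1:ℝ) < R := lt_of_le_of_lt (le_max_right M 1) hR
  have hRM : M < R := lt_of_le_of_lt (le_max_left M 1) hR
  have hR0 : (0:ℝ) < R := lt_trans one_pos hR1
  have hδ0 : (0:ℝ) < δ := lt_trans hβ0 hβδ
  set c'' : ℝ := max c ((max M 1) ^ δ) with hc''def
  have hc''0 : 0 < c'' := lt_max_of_lt_left hc
  set A : ℝ := R ^ β with hAdef
  have hA0 : (0:ℝ) < A := Real.rpow_pos_of_pos hR0 _
  have hRfin : lam (Set.Ioi R) ≠ ⊤ := hfin R hR0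
  -- extended scaling bound
  have hb' : ∀ y : ℝ, 1 < y →
      lam (Set.Ioi (R * y)) ≤ ENNReal.ofReal (c'' * y ^ (-δ)) * lam (Set.Ioi R) := by
    intro y hy
    have hy0 : (0:ℝ) < y := lt_trans one_pos hy
    rcases le_or_gt y (max M 1) with hyM | hyM
    · have hmono : lam (Set.Ioi (R * y)) ≤ lam (Set.Ioi R) :=
        measure_mono (Set.Ioi_subset_Ioi (le_mul_of_one_le_right hR0.le hy.le))
      have hyδpos : (0:ℝ) < y ^ δ := Real.rpow_pos_of_pos hy0 _
      have hyδ : y ^ δ ≤ c'' :=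
        le_trans (Real.rpow_le_rpow hy0.le hyM hδ0.le) (le_max_right _ _)
      have h1 : (1:ℝ) ≤ c'' * y ^ (-δ) := by
        rw [Real.rpow_neg hy0.le, ← div_eq_mul_inv]
        exact (one_le_div hyδpos).2 hyδ
      calc lam (Set.Ioi (R * y)) ≤ lam (Set.Ioi R) := hmono
        _ = 1 * lam (Set.Ioi R) := (one_mul _).symm
        _ ≤ ENNReal.ofReal (c'' * y ^ (-δ)) * lam (Set.Ioi R) :=
            mul_le_mul_left (ENNReal.one_le_ofReal.2 h1) _
    · have hby := hb R y hRM (lt_of_le_of_lt (le_max_left M 1) hyM)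
      have hfin1 : lam (Set.Ioi (R * y)) ≠ ⊤ := hfin _ (by positivity)
      have h2 : c * y ^ (-δ) * (lam (Set.Ioi R)).toReal
          ≤ c'' * y ^ (-δ) * (lam (Set.Ioi R)).toReal :=
        mul_le_mul_of_nonneg_right
          (mul_le_mul_of_nonneg_right (le_max_left _ _) (Real.rpow_nonneg hy0.le _))
          ENNReal.toReal_nonneg
      rw [← ENNReal.ofReal_toReal hfin1]
      calc ENNReal.ofReal (lam (Set.Ioi (R * y))).toReal
          ≤ ENNReal.ofReal (c'' * y ^ (-δ) * (lam (Set.Ioi R)).toReal) :=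
            ENNReal.ofReal_le_ofReal (le_trans hby h2)
        _ = ENNReal.ofReal (c'' * y ^ (-δ)) * ENNReal.ofReal (lam (Set.Ioi R)).toReal := by
            rw [ENNReal.ofReal_mul (by positivity)]
        _ = ENNReal.ofReal (c'' * y ^ (-δ)) * lam (Set.Ioi R) := by
            rw [ENNReal.ofReal_toReal hRfin]
  -- layer cake
  have hlc : ∫⁻ z in Set.Ioi R, ENNReal.ofReal (z ^ β) ∂lam
      = ∫⁻ v in Set.Ioi (0:ℝ), (lam.restrict (Set.Ioi R)) {z | v < z ^ β} := by
    refine lintegral_eq_lintegral_meas_lt _ ?_ ?_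
    · refine (ae_restrict_iff' measurableSet_Ioi).2 (ae_of_all _ (fun z hz => ?_))
      exact Real.rpow_nonneg (le_of_lt (lt_trans hR0 hz)) β
    · exact (by fun_prop : Measurable fun z : ℝ => z ^ β).aemeasurable
  set φ : ℝ → ℝ≥0∞ := fun v => lam (Set.Ioi (max R ((max v 0) ^ (1/β)))) with hφdef
  have hφanti : Antitone φ := by
    intro v₁ v₂ h12
    refine measure_mono (Set.Ioi_subset_Ioi (max_le_max le_rfl ?_))
    exact Real.rpow_le_rpow (le_max_right _ 0) (max_le_max h12 le_rfl) (by positivity)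
  have hstep2 : ∀ v ∈ Set.Ioi (0:ℝ), (lam.restrict (Set.Ioi R)) {z | v < z ^ β} ≤ φ v := by
    intro v hv
    rw [Measure.restrict_apply' measurableSet_Ioi]
    refine measure_mono (fun z hz => ?_)
    obtain ⟨hz1, hz2⟩ := hz
    have hz0 : (0:ℝ) < z := lt_trans hR0 hz2
    rw [Set.mem_Ioi, max_lt_iff]
    refine ⟨hz2, ?_⟩
    have hmax : max v (0:ℝ) = v := max_eq_left (le_of_lt hv)
    rw [hmax]
    have h3 : v ^ (1/β) < (z ^ β) ^ (1/β) :=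
      Real.rpow_lt_rpow (le_of_lt hv) hz1 (by positivity)
    rwa [← Real.rpow_mul hz0.le, mul_one_div, div_self hβ0.ne', Real.rpow_one] at h3
  calc ∫⁻ z in Set.Ioi R, ENNReal.ofReal (z ^ β) ∂lam
      = ∫⁻ v in Set.Ioi (0:ℝ), (lam.restrict (Set.Ioi R)) {z | v < z ^ β} := hlc
    _ ≤ ∫⁻ v in Set.Ioi (0:ℝ), φ v := setLIntegral_mono hφanti.measurable hstep2
    _ = (∫⁻ v in Set.Ioc (0:ℝ) A, φ v) + ∫⁻ v in Set.Ioi A, φ v := by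
        rw [← Set.Ioc_union_Ioi_eq_Ioi hA0.le,
          lintegral_union measurableSet_Ioi (Set.Ioc_disjoint_Ioi le_rfl)]
    _ ≤ lam (Set.Ioi R) * ENNReal.ofReal A
        + ENNReal.ofReal (c'' * R ^ δ * (A ^ (-(δ/β) + 1) / (δ/β - 1))) * lam (Set.Ioi R) := by
        gcongr
        · calc ∫⁻ v in Set.Ioc (0:ℝ) A, φ v
              ≤ ∫⁻ _ in Set.Ioc (0:ℝ) A, lam (Set.Ioi R) := by
                refine setLIntegral_mono measurable_const (fun v hv => ?_)
                exact measure_mono (Set.Ioi_subset_Ioi (le_max_left _ _))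
            _ = lam (Set.Ioi R) * ENNReal.ofReal A := by
                rw [setLIntegral_const, Real.volume_Ioc, sub_zero]
        · -- piece 2
          have hptw : ∀ v ∈ Set.Ioi A, φ v
              ≤ (ENNReal.ofReal (c'' * R ^ δ) * lam (Set.Ioi R))
                  * ENNReal.ofReal ((max v 0) ^ (-(δ/β))) := by
            intro v hv
            have hvA : A < v := hv
            have hv0 : (0:ℝ) < v := lt_trans hA0 hvA
            have hmaxv : max v (0:ℝ) = v := max_eq_left hv0.le
            have hv1β : R < v ^ (1/β) := by
              have := Real.rpow_lt_rpow hA0.le hvA (by positivity : (0:ℝ) < 1/β)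
              rwa [hAdef, ← Real.rpow_mul hR0.le, mul_one_div, div_self hβ0.ne',
                Real.rpow_one] at this
            have hφv : φ v = lam (Set.Ioi (v ^ (1/β))) := by
              rw [hφdef]
              simp only [hmaxv, max_eq_right (le_of_lt hv1β)]
            have hy1 : 1 < v ^ (1/β) / R := (one_lt_div hR0).2 hv1β
            have harg : R * (v ^ (1/β) / R) = v ^ (1/β) := by field_simp
            have hbnd := hb' _ hy1
            rw [harg] at hbnd
            rw [hφv]
            refine le_trans hbnd (le_of_eq ?_)
            have hrw : c'' * (v ^ (1/β) / R) ^ (-δ)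
                = (c'' * R ^ δ) * (max v 0) ^ (-(δ/β)) := by
              rw [hmaxv, Real.div_rpow (Real.rpow_nonneg hv0.le _) hR0.le,
                ← Real.rpow_mul hv0.le, Real.rpow_neg hR0.le]
              rw [div_eq_mul_inv, inv_inv, show (1/β) * -δ = -(δ/β) from by ring]
              ring
            rw [hrw, ENNReal.ofReal_mul (by positivity)]
            ring
          calc ∫⁻ v in Set.Ioi A, φ v
              ≤ ∫⁻ v in Set.Ioi A, (ENNReal.ofReal (c'' * R ^ δ) * lam (Set.Ioi R))
                  * ENNReal.ofReal ((max v 0) ^ (-(δ/β))) := by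
                refine setLIntegral_mono (by fun_prop) hptw
            _ = (ENNReal.ofReal (c'' * R ^ δ) * lam (Set.Ioi R))
                  * ∫⁻ v in Set.Ioi A, ENNReal.ofReal ((max v 0) ^ (-(δ/β))) :=
                lintegral_const_mul' _ _
                  (ENNReal.mul_ne_top ENNReal.ofReal_ne_top hRfin)
            _ ≤ ENNReal.ofReal (c'' * R ^ δ * (A ^ (-(δ/β) + 1) / (δ/β - 1)))
                  * lam (Set.Ioi R) := by
                have hI : ∫⁻ v in Set.Ioi A, ENNReal.ofReal ((max v 0) ^ (-(δ/β)))
                    = ENNReal.ofReal (A ^ (-(δ/β) + 1) / (δ/β - 1)) := by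
                  have hcong : ∫⁻ v in Set.Ioi A, ENNReal.ofReal ((max v 0) ^ (-(δ/β)))
                      = ∫⁻ v in Set.Ioi A, ENNReal.ofReal (v ^ (-(δ/β))) := by
                    refine setLIntegral_congr_fun measurableSet_Ioi
                      (fun v hv => ?_)
                    rw [max_eq_left (le_of_lt (lt_trans hA0 hv))]
                  have hexp : -(δ/β) < -1 := by
                    rw [neg_lt_neg_iff]
                    exact (one_lt_div hβ0).2 hβδ
                  have hint := integral_Ioi_rpow_of_lt hexp hA0
                  have hIOn : IntegrableOn (fun v : ℝ => v ^ (-(δ/β))) (Set.Ioi A) :=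
                    integrableOn_Ioi_rpow_of_lt hexp hA0
                  rw [hcong, ← ofReal_integral_eq_lintegral_ofReal hIOn
                    ((ae_restrict_iff' measurableSet_Ioi).2 (ae_of_all _ (fun v hv =>
                      Real.rpow_nonneg (le_of_lt (lt_trans hA0 hv)) _)))]
                  rw [hint]
                  congr 1
                  rw [neg_div, show -(δ/β) + 1 = -(δ/β - 1) from by ring, div_neg, neg_neg]
                rw [hI, mul_right_comm, ← ENNReal.ofReal_mul (by positivity)]
    _ ≤ _ := by
        have hpos : (0:ℝ) < δ/β - 1 := by
          have := (one_lt_div hβ0).2 hβδ; linarith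
        have hAe : A ^ (-(δ/β) + 1) = R ^ (β - δ) := by
          rw [hAdef, ← Real.rpow_mul hR0.le]
          congr 1
          field_simp
          ring
        have hRδ : R ^ δ * R ^ (β - δ) = R ^ β := by
          rw [← Real.rpow_add hR0]; congr 1; ring
        have hreal : A + c'' * R ^ δ * (A ^ (-(δ/β)+1) / (δ/β - 1))
            = (1 + c''/(δ/β-1)) * R ^ β := by
          calc A + c'' * R ^ δ * (A ^ (-(δ/β)+1) / (δ/β - 1))
              = R ^ β + c'' * (R ^ δ * R ^ (β - δ)) / (δ/β - 1) := by
                rw [hAe, hAdef]; ring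
            _ = (1 + c''/(δ/β-1)) * R ^ β := by rw [hRδ]; ring
        have hT2 : (0:ℝ) ≤ c'' * R ^ δ * (A ^ (-(δ/β)+1)/(δ/β-1)) :=
          mul_nonneg (mul_nonneg hc''0.le (Real.rpow_nonneg hR0.le _))
            (div_nonneg (Real.rpow_nonneg hA0.le _) hpos.le)
        rw [← hreal, ENNReal.ofReal_add hA0.le hT2, add_mul]
        exact le_of_eq (by ring)


private lemma pker_lower {d : ℕ} {α : ℝ} (hα0 : 0 < α) {g : ℝ → ℝ}
    (hg_anti : StrictAntiOn g (Set.Ici 0)) (hg_pos : ∀ x : ℝ, 0 ≤ x → 0 < g x)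
    {s s₀ : ℝ} (hs₀ : 0 < s₀) (hs1 : s₀/2 < s) (hs2 : s ≤ s₀)
    {y : EuclideanSpace ℝ (Fin d)} (hy : ‖y‖ ≤ (s₀/2) ^ ((1:ℝ)/α)) :
    s₀ ^ (-((d:ℝ)/α)) * g 1 ≤ pker d α g s y := by
  have hs0 : 0 < s := lt_trans (by positivity) hs1
  have harg0 : 0 ≤ ‖y‖ / s ^ ((1:ℝ)/α) :=
    div_nonneg (norm_nonneg _) (Real.rpow_pos_of_pos hs0 _).le
  have harg1 : ‖y‖ / s ^ ((1:ℝ)/α) ≤ 1 := by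
    rw [div_le_one (Real.rpow_pos_of_pos hs0 _)]
    refine le_trans hy (Real.rpow_le_rpow (by positivity) hs1.le (by positivity))
  have hgmono : g 1 ≤ g (‖y‖ / s ^ ((1:ℝ)/α)) := by
    rcases eq_or_lt_of_le harg1 with he | hlt
    · rw [he]
    · exact (hg_anti harg0 (by norm_num : (1:ℝ) ∈ Set.Ici 0) hlt).le
  have hsfac : s₀ ^ (-((d:ℝ)/α)) ≤ s ^ (-((d:ℝ)/α)) :=
    Real.rpow_le_rpow_of_nonpos hs0 hs2
      (neg_nonpos.2 (div_nonneg (Nat.cast_nonneg d) hα0.le))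
  exact mul_le_mul hsfac hgmono (hg_pos 1 (by norm_num)).le
    (Real.rpow_pos_of_pos hs0 _).le

private lemma block_measure (d : ℕ) {t : ℝ} (lam : Measure ℝ) [SigmaFinite lam]
    {s₁ s₂ ε z₀ : ℝ} (h1 : 0 < s₁) (h2 : s₁ ≤ s₂) (h3 : s₂ ≤ t) (hε : 0 ≤ ε) (hz : 0 < z₀) :
    ((MeasureTheory.volume.restrict (Set.Ioc (0:ℝ) t)).prod
      ((MeasureTheory.volume : Measure (EuclideanSpace ℝ (Fin d))).prod
        (lam.restrict (Set.Ioi (0:ℝ)))))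
      (Set.Ioc s₁ s₂ ×ˢ (Metric.closedBall (0 : EuclideanSpace ℝ (Fin d)) ε ×ˢ Set.Ioi z₀))
    = ENNReal.ofReal (s₂ - s₁) * (ENNReal.ofReal (ε ^ d)
        * MeasureTheory.volume (Metric.ball (0 : EuclideanSpace ℝ (Fin d)) 1)
        * lam (Set.Ioi z₀)) := by
  rw [Measure.prod_prod, Measure.prod_prod]
  rw [Measure.restrict_apply measurableSet_Ioc, Measure.restrict_apply measurableSet_Ioi]
  rw [Set.inter_eq_left.2 (Set.Ioc_subset_Ioc h1.le h3),
    Set.inter_eq_left.2 (Set.Ioi_subset_Ioi hz.le)]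
  rw [Real.volume_Ioc, Measure.addHaar_closedBall _ _ hε, finrank_euclideanSpace_fin]

private lemma exists_z1 {lam : Measure ℝ} (hlam0 : lam (Set.Iic 0) = 0) (hlam_ne : lam ≠ 0) :
    ∃ z₁ : ℝ, 0 < z₁ ∧ lam (Set.Ioi z₁) ≠ 0 := by
  by_contra h
  push_neg at h
  apply hlam_ne
  have hIoi : lam (Set.Ioi (0:ℝ)) = 0 := by
    have hun : Set.Ioi (0:ℝ) = ⋃ n : ℕ, Set.Ioi (((n:ℝ)+1)⁻¹) := by
      ext z
      simp only [Set.mem_Ioi, Set.mem_iUnion]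
      constructor
      · intro hz
        obtain ⟨n, hn⟩ := exists_nat_one_div_lt hz
        exact ⟨n, by rwa [one_div] at hn⟩
      · rintro ⟨n, hn⟩
        exact lt_trans (by positivity) hn
    rw [hun]
    exact measure_iUnion_null (fun n => h _ (by positivity))
  refine Measure.measure_univ_eq_zero.1 ?_
  rw [show (Set.univ : Set ℝ) = Set.Iic 0 ∪ Set.Ioi 0 from (Set.Iic_union_Ioi).symm]
  refine le_antisymm (le_trans (measure_union_le _ _) ?_) zero_le
  rw [hlam0, hIoi, add_zero]


private lemma B_bound (d : ℕ) {α t : ℝ} (hα0 : 0 < α) (ht : 0 < t)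
    (lam : Measure ℝ) [SigmaFinite lam]
    {g : ℝ → ℝ} (hg_cont : ContinuousOn g (Set.Ici 0))
    {Cg : ℝ} (hCg0 : 0 < Cg) (hCg : ∀ x : ℝ, 0 < x → g x ≤ Cg * x ^ (-((d:ℝ) + α)))
    {r : ℝ} (hr : 0 < r) :
    (MeasureTheory.volume.prod
        ((MeasureTheory.volume : Measure (EuclideanSpace ℝ (Fin d))).prod lam))
      ({q : ℝ × EuclideanSpace ℝ (Fin d) × ℝ |
          1/2 < ‖q.2.1‖ ∧ r < pker d α g q.1 q.2.1 * q.2.2}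
        ∩ (Set.Ioc (0:ℝ) t ×ˢ ((Set.univ : Set (EuclideanSpace ℝ (Fin d))) ×ˢ Set.Ioi (0:ℝ))))
    ≤ ENNReal.ofReal t * (ENNReal.ofReal ((Cg * t / r) ^ ((d:ℝ)/((d:ℝ)+α)))
        * MeasureTheory.volume (Metric.ball (0 : EuclideanSpace ℝ (Fin d)) 1))
      * ∫⁻ z in Set.Ioi (r / (2 ^ ((d:ℝ) + α) * Cg * t)),
          ENNReal.ofReal (z ^ ((d:ℝ)/((d:ℝ)+α))) ∂lam := by
  classical
  set D : ℝ := (d : ℝ) with hD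
  have hDα : 0 < D + α := by positivity
  set β : ℝ := D / (D + α) with hβ
  set R : ℝ := r / (2 ^ (D + α) * Cg * t) with hRdef
  have hR0 : 0 < R := by
    have h2 : (0:ℝ) < 2 ^ (D + α) := Real.rpow_pos_of_pos two_pos _
    positivity
  set E := EuclideanSpace ℝ (Fin d)
  set ωd : ℝ≥0∞ := MeasureTheory.volume (Metric.ball (0 : E) 1) with hωd
  set J : ℝ≥0∞ := ∫⁻ z in Set.Ioi R, ENNReal.ofReal (z ^ β) ∂lam with hJ
  set box : Set (ℝ × E × ℝ) :=
    Set.Ioc (0:ℝ) t ×ˢ ((Set.univ : Set E) ×ˢ Set.Ioi (0:ℝ)) with hbox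
  set Bs : Set (ℝ × E × ℝ) :=
    {q : ℝ × E × ℝ | 1/2 < ‖q.2.1‖ ∧ r < pker d α g q.1 q.2.1 * q.2.2} ∩ box with hBs
  set W : ℝ≥0∞ := (ENNReal.ofReal ((Cg * t / r) ^ β) * ωd) * J with hW
  have hmbleB : MeasurableSet Bs := by
    have h1 : Bs = ({q : ℝ × E × ℝ | 1/2 < ‖q.2.1‖}) ∩
        ({q : ℝ × E × ℝ | r < pker d α g q.1 q.2.1 * q.2.2} ∩ box) := by
      rw [hBs]; ext q
      simp only [Set.mem_inter_iff, Set.mem_setOf_eq]; tauto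
    rw [h1]
    exact ((isOpen_lt continuous_const (continuous_snd.fst.norm)).measurableSet).inter
      (mble_SF d hα0 hg_cont r)
  rw [Measure.prod_apply hmbleB]
  have hsec : ∀ s : ℝ, s ∈ Set.Ioc (0:ℝ) t → ∀ z : ℝ,
      MeasureTheory.volume ((fun y : E => (y, z)) ⁻¹' (Prod.mk s ⁻¹' Bs))
      ≤ (Set.Ioi R).indicator
          (fun z => ENNReal.ofReal ((Cg * t / r) ^ β * z ^ β) * ωd) z := by
    intro s hs z
    have hmem : ∀ y : E, y ∈ ((fun y : E => (y, z)) ⁻¹' (Prod.mk s ⁻¹' Bs)) →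
        (1/2 < ‖y‖ ∧ r < pker d α g s y * z) ∧ (s ∈ Set.Ioc (0:ℝ) t ∧ z ∈ Set.Ioi (0:ℝ)) := by
      intro y hy
      simp only [Set.mem_preimage, hBs, Set.mem_inter_iff, Set.mem_setOf_eq, hbox,
        Set.mem_prod, Set.mem_univ, true_and] at hy
      exact ⟨hy.1, hy.2⟩
    have hkey : ∀ y : E, y ∈ ((fun y : E => (y, z)) ⁻¹' (Prod.mk s ⁻¹' Bs)) →
        ‖y‖ ^ (D + α) < Cg * z * t / r ∧ 0 < z ∧ 1/2 < ‖y‖ := by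
      intro y hy
      obtain ⟨⟨hy1, hy2⟩, ⟨hs', hz'⟩⟩ := hmem y hy
      have hz0 : (0:ℝ) < z := hz'
      exact ⟨key_arith hα0 hCg hCg0 ht hr hs'.1 hs'.2 hz0 (lt_trans (by norm_num) hy1) hy2,
        hz0, hy1⟩
    by_cases hzR : z ∈ Set.Ioi R
    · rw [Set.indicator_of_mem hzR]
      have hz0 : (0:ℝ) < z := lt_trans hR0 hzR
      set X : ℝ := Cg * z * t / r with hX
      have hX0 : 0 < X := by positivity
      have hsub : ((fun y : E => (y, z)) ⁻¹' (Prod.mk s ⁻¹' Bs)) ⊆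
          Metric.closedBall (0 : E) (X ^ (1/(D + α))) := by
        intro y hy
        obtain ⟨hkey1, _, _⟩ := hkey y hy
        rw [Metric.mem_closedBall, dist_zero_right]
        have hcollapse : (‖y‖ ^ (D + α)) ^ (1/(D+α)) = ‖y‖ := by
          rw [← Real.rpow_mul (norm_nonneg y), mul_one_div, div_self hDα.ne', Real.rpow_one]
        calc ‖y‖ = (‖y‖ ^ (D + α)) ^ (1/(D+α)) := hcollapse.symm
          _ ≤ X ^ (1/(D+α)) := Real.rpow_le_rpow (by positivity) hkey1.le (by positivity)
      refine le_trans (measure_mono hsub) ?_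
      rw [MeasureTheory.Measure.addHaar_closedBall _ _ (by positivity : (0:ℝ) ≤ X ^ (1/(D+α)))]
      have hrad : (X ^ (1/(D+α))) ^ (Module.finrank ℝ E) = (Cg * t / r) ^ β * z ^ β := by
        have hfr : Module.finrank ℝ E = d := finrank_euclideanSpace_fin
        rw [hfr, ← Real.rpow_natCast (X ^ (1/(D+α))) d, ← Real.rpow_mul hX0.le]
        have hexp : (1/(D+α)) * (d:ℝ) = β := by rw [hβ, ← hD]; ring
        rw [hexp]
        have hXeq : X = (Cg * t / r) * z := by rw [hX]; ring
        rw [hXeq, Real.mul_rpow (by positivity) hz0.le]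
      rw [hrad]
    · rw [Set.indicator_of_notMem hzR]
      have hempty : ((fun y : E => (y, z)) ⁻¹' (Prod.mk s ⁻¹' Bs)) = ∅ := by
        rw [Set.eq_empty_iff_forall_notMem]
        intro y hy
        obtain ⟨hkey1, hz0, hy1⟩ := hkey y hy
        apply hzR
        have h12 : ((1:ℝ)/2) ^ (D + α) ≤ ‖y‖ ^ (D + α) :=
          Real.rpow_le_rpow (by norm_num) hy1.le hDα.le
        have h2inv : ((1:ℝ)/2) ^ (D + α) = ((2:ℝ) ^ (D + α))⁻¹ := by
          rw [one_div, ← Real.inv_rpow (by norm_num : (0:ℝ) ≤ 2)]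
        have h2pos : (0:ℝ) < 2 ^ (D + α) := Real.rpow_pos_of_pos two_pos _
        have hlt : ((2:ℝ) ^ (D + α))⁻¹ < Cg * z * t / r := by
          rw [← h2inv]; exact lt_of_le_of_lt h12 hkey1
        rw [Set.mem_Ioi, hRdef, div_lt_iff₀ (by positivity)]
        rw [lt_div_iff₀ hr] at hlt
        have h5 := mul_lt_mul_of_pos_left hlt h2pos
        rw [← mul_assoc, mul_inv_cancel₀ h2pos.ne', one_mul] at h5
        rw [show z * (2 ^ (D+α) * Cg * t) = 2 ^ (D+α) * (Cg * z * t) by ring]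
        exact h5
      rw [hempty, measure_empty]
  calc ∫⁻ s, ((MeasureTheory.volume : Measure E).prod lam) (Prod.mk s ⁻¹' Bs) ∂MeasureTheory.volume
      ≤ ∫⁻ s, (Set.Ioc (0:ℝ) t).indicator (fun _ => W) s ∂MeasureTheory.volume := by
        refine lintegral_mono (fun s => ?_)
        by_cases hs : s ∈ Set.Ioc (0:ℝ) t
        · rw [Set.indicator_of_mem hs]
          rw [Measure.prod_apply_symm (measurable_prodMk_left hmbleB)]
          calc ∫⁻ z, MeasureTheory.volume ((fun y : E => (y, z)) ⁻¹' (Prod.mk s ⁻¹' Bs)) ∂lam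
              ≤ ∫⁻ z, (Set.Ioi R).indicator
                  (fun z => ENNReal.ofReal ((Cg * t / r) ^ β * z ^ β) * ωd) z ∂lam :=
              lintegral_mono (hsec s hs)
            _ = ∫⁻ z in Set.Ioi R,
                  ENNReal.ofReal ((Cg * t / r) ^ β * z ^ β) * ωd ∂lam := by
              rw [lintegral_indicator measurableSet_Ioi]
            _ = W := by
              have hptw : ∀ z : ℝ, ENNReal.ofReal ((Cg * t / r) ^ β * z ^ β) * ωd
                  = (ENNReal.ofReal ((Cg * t / r) ^ β) * ωd) * ENNReal.ofReal (z ^ β) := by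
                intro z
                rw [ENNReal.ofReal_mul (by positivity)]
                ring
              simp_rw [hptw]
              rw [lintegral_const_mul' _ _ ?hne]
              case hne =>
                exact ENNReal.mul_ne_top ENNReal.ofReal_ne_top
                  (MeasureTheory.measure_ball_lt_top).ne
        · rw [Set.indicator_of_notMem hs]
          have : Prod.mk s ⁻¹' Bs = ∅ := by
            rw [Set.eq_empty_iff_forall_notMem]
            intro yz hyz
            simp only [Set.mem_preimage, hBs, Set.mem_inter_iff, hbox, Set.mem_prod] at hyz
            exact hs hyz.2.1
          rw [this, measure_empty]
    _ = W * ENNReal.ofReal t := by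
        rw [lintegral_indicator_const measurableSet_Ioc, Real.volume_Ioc, sub_zero]
    _ = ENNReal.ofReal t * (ENNReal.ofReal ((Cg * t / r) ^ β) * ωd) * J := by
        rw [hW]; ring


private lemma ennreal_compare {a b u v L : ℝ≥0∞} (hu0 : u ≠ 0) (hutop : u ≠ ⊤)
    (h1 : a ≤ v * L) (h2 : u * L ≤ b) : a ≤ v * u⁻¹ * b := by
  calc a ≤ v * L := h1
    _ = v * u⁻¹ * (u * L) := by
        rw [mul_assoc, ← mul_assoc u⁻¹, ENNReal.inv_mul_cancel hu0 hutop, one_mul]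
    _ ≤ v * u⁻¹ * b := mul_le_mul_right h2 _
set_option maxHeartbeats 2000000 in
theorem stmt14 (d : ℕ) (hd : 1 ≤ d) (α : ℝ) (hα : α ∈ Set.Ioo (0:ℝ) 2) (t : ℝ) (ht : 0 < t)
    (lam : MeasureTheory.Measure ℝ) [SigmaFinite lam]
    (hlam0 : lam (Set.Iic 0) = 0) (hlam_ne : lam ≠ 0)
    (hmom : ∫⁻ z in Set.Ioi (0:ℝ), ENNReal.ofReal (min 1 (z ^ 2)) ∂lam ≠ ⊤)
    (g : ℝ → ℝ) (hg_cont : ContinuousOn g (Set.Ici 0))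
    (hg_anti : StrictAntiOn g (Set.Ici 0)) (hg_pos : ∀ x : ℝ, 0 ≤ x → 0 < g x)
    (c₀ : ℝ) (hc₀ : 0 < c₀)
    (hg_tail : Filter.Tendsto (fun r : ℝ => r ^ ((d:ℝ) + α) * g r) Filter.atTop (nhds c₀))
    (hsmall : ∫⁻ z in Set.Ioc (0:ℝ) 1, ENNReal.ofReal (z ^ (1 + α / (d:ℝ))) ∂lam ≠ ⊤)
    (hbig : ∫⁻ z in Set.Ioi (1:ℝ), ENNReal.ofReal (z ^ ((d:ℝ) / ((d:ℝ) + α))) ∂lam ≠ ⊤)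
    (hcase :
      (∫⁻ z in Set.Ioi (1:ℝ), ENNReal.ofReal (z ^ (1 + α / (d:ℝ))) ∂lam ≠ ⊤) ∨
      (∃ δ c M : ℝ, (d:ℝ) / ((d:ℝ) + α) < δ ∧ 0 < c ∧ 0 < M ∧
        ∀ r y : ℝ, M < r → M < y →
          (lam (Set.Ioi (r * y))).toReal ≤ c * y ^ (-δ) * (lam (Set.Ioi r)).toReal)) :
    ∃ C : ℝ, 1 ≤ C ∧ ∀ᶠ r : ℝ in Filter.atTop,
      C⁻¹ * (etaBar d α t g lam r).toReal ≤ (etaZeroBar d α t g lam r).toReal ∧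
      (etaZeroBar d α t g lam r).toReal ≤ C * (etaBar d α t g lam r).toReal := by
  classical
  obtain ⟨hα0, hα2⟩ := hα
  have hD1 : (1:ℝ) ≤ (d:ℝ) := by exact_mod_cast hd
  have hD0 : (0:ℝ) < (d:ℝ) := by linarith
  have hDα : (0:ℝ) < (d:ℝ) + α := by linarith
  obtain ⟨Cg, hCg0, hCg⟩ := exists_Cg hα0 hg_anti hg_pos hc₀ hg_tail
  set β : ℝ := (d:ℝ) / ((d:ℝ) + α) with hβdef
  set γ : ℝ := 1 + α / (d:ℝ) with hγdef
  have hβ0 : 0 < β := by positivity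
  have hβ1 : β < 1 := by rw [hβdef, div_lt_one hDα]; linarith
  have hγ1 : 1 < γ := by
    have h : 0 < α / (d:ℝ) := by positivity
    rw [hγdef]; linarith
  have hβγ : β ≤ γ := by linarith
  have h2p : (0:ℝ) < 2 ^ ((d:ℝ) + α) := Real.rpow_pos_of_pos two_pos _
  set m : ℝ := 2 ^ ((d:ℝ) + α) * Cg * t with hmdef
  have hm0 : 0 < m := by rw [hmdef]; positivity
  have hg1 : 0 < g 1 := hg_pos 1 (by norm_num)
  set ν := ((MeasureTheory.volume : MeasureTheory.Measure ℝ).prod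
      ((MeasureTheory.volume : MeasureTheory.Measure (EuclideanSpace ℝ (Fin d))).prod lam))
    with hνdef
  set box : Set (ℝ × EuclideanSpace ℝ (Fin d) × ℝ) :=
    Set.Ioc (0:ℝ) t ×ˢ ((Set.univ : Set (EuclideanSpace ℝ (Fin d))) ×ˢ Set.Ioi (0:ℝ))
    with hboxdef
  set ωd : ℝ≥0∞ := MeasureTheory.volume (Metric.ball (0 : EuclideanSpace ℝ (Fin d)) 1)
    with hωddef
  have hωd0 : ωd ≠ 0 := (Metric.measure_ball_pos _ _ one_pos).ne'
  have hωdtop : ωd ≠ ⊤ := measure_ball_lt_top.ne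
  have htail : ∀ x : ℝ, 0 < x → lam (Set.Ioi x) ≠ ⊤ := fun x hx => tail_ne_top hmom hx
  have hEB : ∀ r : ℝ, etaBar d α t g lam r
      = ν ({q : ℝ × EuclideanSpace ℝ (Fin d) × ℝ | r < pker d α g q.1 q.2.1 * q.2.2} ∩ box) :=
    fun r => measure_eq_box d t lam _
  have hEZ : ∀ r : ℝ, etaZeroBar d α t g lam r
      = ν ({q : ℝ × EuclideanSpace ℝ (Fin d) × ℝ | ‖q.2.1‖ ≤ 1/2 ∧
          max r (if ((d:ℝ) < α) then 1 else 0) < pker d α g q.1 q.2.1 * q.2.2} ∩ box) :=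
    fun r => measure_eq_box d t lam _
  have hcmp : ∃ K : ℝ≥0∞, K ≠ ⊤ ∧ ∀ᶠ r : ℝ in Filter.atTop,
      ν ({q : ℝ × EuclideanSpace ℝ (Fin d) × ℝ |
            1/2 < ‖q.2.1‖ ∧ r < pker d α g q.1 q.2.1 * q.2.2} ∩ box)
        ≤ K * etaZeroBar d α t g lam r := by
    rcases hcase with hAint | ⟨δ, c, M, hδβ, hc, hM, hb⟩
    · -- Case (a): finite (1+α/d)-moment at infinity
      obtain ⟨z₁, hz₁0, hz₁ne⟩ := exists_z1 hlam0 hlam_ne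
      have hz₁top : lam (Set.Ioi z₁) ≠ ⊤ := htail z₁ hz₁0
      set Mγ : ℝ≥0∞ := ∫⁻ z in Set.Ioi (1:ℝ), ENNReal.ofReal (z ^ γ) ∂lam with hMγdef
      set cB : ℝ := t * (Cg*t)^β * (m^γ/m^β) with hcBdef
      have hcB0 : 0 < cB := by
        have h1 : (0:ℝ) < (Cg*t)^β := Real.rpow_pos_of_pos (by positivity) _
        have h2 : (0:ℝ) < m^γ := Real.rpow_pos_of_pos hm0 _
        have h3 : (0:ℝ) < m^β := Real.rpow_pos_of_pos hm0 _
        rw [hcBdef]; positivity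
      set T₀ : ℝ := min t (2 * (1/2:ℝ) ^ α) with hT₀def
      have hT₀0 : 0 < T₀ := lt_min ht (by positivity)
      set cA : ℝ := (z₁ * g 1 / 2) ^ γ / 2 ^ (1 + (d:ℝ)/α) with hcAdef
      have hcA0 : 0 < cA := by
        have h1 : (0:ℝ) < (z₁ * g 1 / 2) ^ γ := Real.rpow_pos_of_pos (by positivity) _
        have h2 : (0:ℝ) < (2:ℝ) ^ (1 + (d:ℝ)/α) := Real.rpow_pos_of_pos two_pos _
        rw [hcAdef]; positivity
      refine ⟨(ENNReal.ofReal cB * Mγ) * (ENNReal.ofReal cA * lam (Set.Ioi z₁))⁻¹, ?_, ?_⟩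
      · refine ENNReal.mul_ne_top (ENNReal.mul_ne_top ENNReal.ofReal_ne_top hAint) ?_
        rw [ENNReal.inv_ne_top]
        exact mul_ne_zero (ENNReal.ofReal_pos.2 hcA0).ne' hz₁ne
      · have hT₀' : (0:ℝ) < T₀ ^ ((d:ℝ)/α) := Real.rpow_pos_of_pos hT₀0 _
        filter_upwards [Filter.eventually_ge_atTop
          (max (max 1 m) (z₁ * g 1 / (2 * T₀ ^ ((d:ℝ)/α))))] with r hr
        have hr1 : (1:ℝ) ≤ r := le_trans (le_trans (le_max_left 1 m) (le_max_left _ _)) hr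
        have hr0 : (0:ℝ) < r := lt_of_lt_of_le one_pos hr1
        have hrm : (1:ℝ) ≤ r / m := by
          rw [le_div_iff₀ hm0, one_mul]
          exact le_trans (le_trans (le_max_right 1 m) (le_max_left _ _)) hr
        have hXle : z₁ * g 1 / (2*r) ≤ T₀ ^ ((d:ℝ)/α) := by
          have h5 : z₁ * g 1 / (2 * T₀ ^ ((d:ℝ)/α)) ≤ r := le_trans (le_max_right _ _) hr
          rw [div_le_iff₀ (by positivity)] at h5 ⊢
          nlinarith [hT₀']
        have hX0 : (0:ℝ) < z₁ * g 1 / (2*r) := by positivity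
        set S : ℝ := (z₁ * g 1 / (2*r)) ^ (α/(d:ℝ)) with hSdef
        have hS0 : 0 < S := Real.rpow_pos_of_pos hX0 _
        have hScoll : S ≤ T₀ := by
          have h6 := Real.rpow_le_rpow hX0.le hXle (by positivity : (0:ℝ) ≤ α/(d:ℝ))
          rwa [← Real.rpow_mul hT₀0.le,
            show ((d:ℝ)/α) * (α/(d:ℝ)) = 1 from by field_simp, Real.rpow_one] at h6
        have hSt : S ≤ t := le_trans hScoll (min_le_left _ _)
        have hShalf : (S/2) ^ ((1:ℝ)/α) ≤ 1/2 := by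
          have h7 : S/2 ≤ (1/2:ℝ)^α := by
            have h8 := le_trans hScoll (min_le_right t (2 * (1/2:ℝ) ^ α))
            linarith
          have h8 := Real.rpow_le_rpow (by positivity) h7 (by positivity : (0:ℝ) ≤ 1/α)
          rwa [← Real.rpow_mul (by norm_num : (0:ℝ) ≤ 1/2), mul_one_div,
            div_self hα0.ne', Real.rpow_one] at h8
        have hSX : S ^ ((d:ℝ)/α) = z₁ * g 1 / (2*r) := by
          rw [hSdef, ← Real.rpow_mul hX0.le,
            show (α/(d:ℝ)) * ((d:ℝ)/α) = 1 from by field_simp, Real.rpow_one]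
        have hincl : (Set.Ioc (S/2) S ×ˢ
            (Metric.closedBall (0 : EuclideanSpace ℝ (Fin d)) ((S/2) ^ ((1:ℝ)/α))
              ×ˢ Set.Ioi z₁))
            ⊆ {q : ℝ × EuclideanSpace ℝ (Fin d) × ℝ | ‖q.2.1‖ ≤ 1/2 ∧
                max r (if ((d:ℝ) < α) then 1 else 0) < pker d α g q.1 q.2.1 * q.2.2} := by
          intro q hq
          simp only [Set.mem_prod, Set.mem_Ioc, Metric.mem_closedBall, Set.mem_Ioi] at hq
          obtain ⟨⟨hs1, hs2⟩, hy, hz⟩ := hq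
          rw [dist_zero_right] at hy
          have hp := pker_lower hα0 hg_anti hg_pos hS0 hs1 hs2 hy
          have hpeq : S ^ (-((d:ℝ)/α)) * g 1 = 2*r/z₁ := by
            rw [Real.rpow_neg hS0.le, hSX]
            field_simp
          refine ⟨le_trans hy hShalf, ?_⟩
          rw [max_eq_left (by split_ifs <;> linarith)]
          rw [hpeq] at hp
          have hppos : 0 < pker d α g q.1 q.2.1 := lt_of_lt_of_le (by positivity) hp
          calc r < 2*r := by linarith
            _ = (2*r/z₁) * z₁ := by field_simp
            _ ≤ pker d α g q.1 q.2.1 * z₁ := mul_le_mul_of_nonneg_right hp hz₁0.le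
            _ < pker d α g q.1 q.2.1 * q.2.2 := mul_lt_mul_of_pos_left hz hppos
        have hlowval : ENNReal.ofReal (cA * r ^ (-γ)) * (ωd * lam (Set.Ioi z₁))
            ≤ etaZeroBar d α t g lam r := by
          have hbm := block_measure d lam (s₁ := S/2) (s₂ := S)
            (ε := (S/2) ^ ((1:ℝ)/α)) (z₀ := z₁) (t := t)
            (by positivity) (by linarith) hSt (by positivity) hz₁0
          have hmono : ((MeasureTheory.volume.restrict (Set.Ioc (0:ℝ) t)).prod
              ((MeasureTheory.volume : MeasureTheory.Measure (EuclideanSpace ℝ (Fin d))).prod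
                (lam.restrict (Set.Ioi (0:ℝ)))))
              (Set.Ioc (S/2) S ×ˢ
                (Metric.closedBall (0 : EuclideanSpace ℝ (Fin d)) ((S/2) ^ ((1:ℝ)/α))
                  ×ˢ Set.Ioi z₁))
              ≤ etaZeroBar d α t g lam r := measure_mono hincl
          rw [hbm] at hmono
          refine le_trans (le_of_eq ?_) hmono
          have hq1 : ((S/2) ^ ((1:ℝ)/α)) ^ d = (S/2) ^ ((d:ℝ)/α) := by
            rw [← Real.rpow_natCast ((S/2) ^ ((1:ℝ)/α)) d, ← Real.rpow_mul (by positivity)]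
            congr 1
            ring
          have hq2 : (S - S/2) * (S/2) ^ ((d:ℝ)/α) = cA * r ^ (-γ) := by
            have e2 : (S/2) * (S/2) ^ ((d:ℝ)/α) = (S/2) ^ (1 + (d:ℝ)/α) := by
              rw [Real.rpow_add (by positivity), Real.rpow_one]
            have e3 : (S/2) ^ (1 + (d:ℝ)/α) = S ^ (1 + (d:ℝ)/α) / 2 ^ (1 + (d:ℝ)/α) :=
              Real.div_rpow hS0.le (by norm_num : (0:ℝ) ≤ 2) _
            have e4 : S ^ (1 + (d:ℝ)/α) = (z₁ * g 1 / (2*r)) ^ γ := by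
              rw [hSdef, ← Real.rpow_mul hX0.le]
              congr 1
              rw [hγdef]
              field_simp
              ring
            have e5 : (z₁ * g 1 / (2*r)) ^ γ = (z₁ * g 1 / 2) ^ γ * r ^ (-γ) := by
              rw [← div_div, Real.div_rpow (by positivity) hr0.le, Real.rpow_neg hr0.le,
                div_eq_mul_inv]
            calc (S - S/2) * (S/2) ^ ((d:ℝ)/α)
                = (S/2) * (S/2) ^ ((d:ℝ)/α) := by ring_nf
              _ = (z₁ * g 1 / 2) ^ γ * r ^ (-γ) / 2 ^ (1 + (d:ℝ)/α) := by
                  rw [e2, e3, e4, e5]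
              _ = cA * r ^ (-γ) := by rw [hcAdef]; ring
          rw [hq1, ← hq2, ENNReal.ofReal_mul (by linarith : (0:ℝ) ≤ S - S/2)]
          ring
        have hB := B_bound d hα0 ht lam hg_cont hCg0 hCg hr0
        rw [← hmdef, ← hβdef, ← hωddef] at hB
        have hJa := J_bound_a (lam := lam) hβγ hrm
        rw [← hMγdef] at hJa
        have hidr : t * ((Cg * t / r) ^ β * (r/m) ^ (β - γ)) = cB * r ^ (-γ) := by
          have p1 : (0:ℝ) < r ^ β := Real.rpow_pos_of_pos hr0 _
          have p2 : (0:ℝ) < r ^ γ := Real.rpow_pos_of_pos hr0 _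
          have p3 : (0:ℝ) < m ^ β := Real.rpow_pos_of_pos hm0 _
          have p4 : (0:ℝ) < m ^ γ := Real.rpow_pos_of_pos hm0 _
          have e1 : (Cg * t / r) ^ β = (Cg*t)^β / r^β :=
            Real.div_rpow (by positivity) hr0.le _
          have e2 : (r/m) ^ (β - γ) = (r^β/r^γ) / (m^β/m^γ) := by
            rw [Real.div_rpow hr0.le hm0.le, Real.rpow_sub hr0, Real.rpow_sub hm0]
          have e6 : r ^ (-γ) = (r^γ)⁻¹ := Real.rpow_neg hr0.le γ
          rw [e1, e2, e6, hcBdef]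
          field_simp
        refine ennreal_compare (u := ENNReal.ofReal cA * lam (Set.Ioi z₁))
          (v := ENNReal.ofReal cB * Mγ) (L := ENNReal.ofReal (r ^ (-γ)) * ωd)
          (mul_ne_zero (ENNReal.ofReal_pos.2 hcA0).ne' hz₁ne)
          (ENNReal.mul_ne_top ENNReal.ofReal_ne_top hz₁top) ?_ ?_
        · refine le_trans hB (le_trans (mul_le_mul_right hJa _) (le_of_eq ?_))
          calc ENNReal.ofReal t * (ENNReal.ofReal ((Cg * t / r) ^ β) * ωd)
                * (ENNReal.ofReal ((r/m) ^ (β - γ)) * Mγ)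
              = ENNReal.ofReal (t * ((Cg * t / r) ^ β * (r/m) ^ (β - γ))) * ωd * Mγ := by
                rw [ENNReal.ofReal_mul ht.le, ENNReal.ofReal_mul
                  (by positivity : (0:ℝ) ≤ (Cg * t / r) ^ β)]
                ring
            _ = ENNReal.ofReal cB * Mγ * (ENNReal.ofReal (r ^ (-γ)) * ωd) := by
                rw [hidr, ENNReal.ofReal_mul hcB0.le]
                ring
        · refine le_trans (le_of_eq ?_) hlowval
          rw [ENNReal.ofReal_mul hcA0.le]
          ring
    · -- Case (b): doubling-type tail bound
      have hδ0 : 0 < δ := lt_trans hβ0 hδβ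
      have hpos : (0:ℝ) < δ/β - 1 := by
        have h := (one_lt_div hβ0).2 hδβ
        linarith
      set c'' : ℝ := max c ((max M 1) ^ δ) with hc''def
      have hc''0 : 0 < c'' := lt_max_of_lt_left hc
      have hterm : (0:ℝ) < 1 + c''/(δ/β - 1) := by
        have h := div_pos hc''0 hpos
        linarith
      set s₀ : ℝ := min t ((g 1 / m) ^ (α/(d:ℝ))) with hs₀def
      have hs₀0 : 0 < s₀ := lt_min ht (Real.rpow_pos_of_pos (by positivity) _)
      have hs₀t : s₀ ≤ t := min_le_left _ _
      set ε : ℝ := min (1/2 : ℝ) ((s₀/2) ^ ((1:ℝ)/α)) with hεdef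
      have hε0 : 0 < ε := lt_min (by norm_num) (Real.rpow_pos_of_pos (by positivity) _)
      have hε12 : ε ≤ 1/2 := min_le_left _ _
      set Kb : ℝ := t * ((1 + c''/(δ/β - 1)) * (Cg * t / m) ^ β) with hKbdef
      refine ⟨ENNReal.ofReal Kb * (ENNReal.ofReal (s₀/2 * ε^d))⁻¹, ?_, ?_⟩
      · exact ENNReal.mul_ne_top ENNReal.ofReal_ne_top
          (ENNReal.inv_ne_top.2 (ENNReal.ofReal_pos.2 (by positivity)).ne')
      · filter_upwards [Filter.eventually_ge_atTop (max 1 (m * (max M 1 + 1)))] with r hr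
        have hr1 : (1:ℝ) ≤ r := le_trans (le_max_left _ _) hr
        have hr0 : (0:ℝ) < r := lt_of_lt_of_le one_pos hr1
        have hrm : max M 1 < r / m := by
          rw [lt_div_iff₀ hm0]
          have h5 : m * (max M 1 + 1) ≤ r := le_trans (le_max_right _ _) hr
          nlinarith [hm0]
        have hrm0 : 0 < r / m := by positivity
        have hpker_m : ∀ s : ℝ, s ∈ Set.Ioc (s₀/2) s₀ →
            ∀ y : EuclideanSpace ℝ (Fin d), ‖y‖ ≤ ε → m ≤ pker d α g s y := by
          intro s hs y hy
          have h1 := pker_lower hα0 hg_anti hg_pos hs₀0 hs.1 hs.2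
            (le_trans hy (min_le_right _ _))
          refine le_trans ?_ h1
          have h4 : (0:ℝ) < s₀ ^ ((d:ℝ)/α) := Real.rpow_pos_of_pos hs₀0 _
          have hs₀γ : s₀ ^ ((d:ℝ)/α) ≤ g 1 / m := by
            have h2 : s₀ ≤ (g 1 / m) ^ (α/(d:ℝ)) := min_le_right _ _
            have h3 := Real.rpow_le_rpow hs₀0.le h2
              (by positivity : (0:ℝ) ≤ (d:ℝ)/α)
            rwa [← Real.rpow_mul (by positivity : (0:ℝ) ≤ g 1 / m),
              show (α/(d:ℝ)) * ((d:ℝ)/α) = 1 from by field_simp, Real.rpow_one] at h3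
          rw [Real.rpow_neg hs₀0.le, inv_mul_eq_div, le_div_iff₀ h4]
          rw [le_div_iff₀ hm0] at hs₀γ
          linarith
        have hincl : (Set.Ioc (s₀/2) s₀ ×ˢ
            (Metric.closedBall (0 : EuclideanSpace ℝ (Fin d)) ε ×ˢ Set.Ioi (r/m)))
            ⊆ {q : ℝ × EuclideanSpace ℝ (Fin d) × ℝ | ‖q.2.1‖ ≤ 1/2 ∧
                max r (if ((d:ℝ) < α) then 1 else 0) < pker d α g q.1 q.2.1 * q.2.2} := by
          intro q hq
          simp only [Set.mem_prod, Set.mem_Ioc, Metric.mem_closedBall, Set.mem_Ioi] at hq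
          obtain ⟨hs, hy, hz⟩ := hq
          rw [dist_zero_right] at hy
          have hp := hpker_m q.1 hs q.2.1 hy
          refine ⟨le_trans hy hε12, ?_⟩
          rw [max_eq_left (by split_ifs <;> linarith)]
          have hppos : 0 < pker d α g q.1 q.2.1 := lt_of_lt_of_le hm0 hp
          calc r = m * (r/m) := by field_simp
            _ ≤ pker d α g q.1 q.2.1 * (r/m) := mul_le_mul_of_nonneg_right hp hrm0.le
            _ < pker d α g q.1 q.2.1 * q.2.2 := mul_lt_mul_of_pos_left hz hppos
        have hlowval : ENNReal.ofReal (s₀/2 * ε^d) * (ωd * lam (Set.Ioi (r/m)))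
            ≤ etaZeroBar d α t g lam r := by
          have hbm := block_measure d lam (s₁ := s₀/2) (s₂ := s₀) (ε := ε) (z₀ := r/m)
            (t := t) (by positivity) (by linarith) hs₀t hε0.le hrm0
          have hmono : ((MeasureTheory.volume.restrict (Set.Ioc (0:ℝ) t)).prod
              ((MeasureTheory.volume : MeasureTheory.Measure (EuclideanSpace ℝ (Fin d))).prod
                (lam.restrict (Set.Ioi (0:ℝ)))))
              (Set.Ioc (s₀/2) s₀ ×ˢ
                (Metric.closedBall (0 : EuclideanSpace ℝ (Fin d)) ε ×ˢ Set.Ioi (r/m)))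
              ≤ etaZeroBar d α t g lam r := measure_mono hincl
          rw [hbm] at hmono
          refine le_trans (le_of_eq ?_) hmono
          rw [show s₀ - s₀/2 = s₀/2 from by ring, ENNReal.ofReal_mul (by positivity)]
          ring
        have hB := B_bound d hα0 ht lam hg_cont hCg0 hCg hr0
        rw [← hmdef, ← hβdef, ← hωddef] at hB
        have hJb := J_bound_b htail hβ0 hδβ hc hM hb hrm
        rw [← hc''def] at hJb
        have hprod : (Cg * t / r) ^ β * (r/m) ^ β = (Cg * t / m) ^ β := by
          rw [← Real.mul_rpow (by positivity) (by positivity)]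
          congr 1
          field_simp
        have hsplitKb : ENNReal.ofReal Kb
            = ENNReal.ofReal t * ENNReal.ofReal (1 + c''/(δ/β - 1))
              * ENNReal.ofReal ((Cg * t / m) ^ β) := by
          rw [hKbdef, ENNReal.ofReal_mul ht.le, ENNReal.ofReal_mul hterm.le, mul_assoc]
        refine ennreal_compare (u := ENNReal.ofReal (s₀/2 * ε^d))
          (v := ENNReal.ofReal Kb) (L := ωd * lam (Set.Ioi (r/m)))
          (ENNReal.ofReal_pos.2 (by positivity)).ne' ENNReal.ofReal_ne_top ?_ ?_
        · refine le_trans hB (le_trans (mul_le_mul_right hJb _) (le_of_eq ?_))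
          calc ENNReal.ofReal t * (ENNReal.ofReal ((Cg * t / r) ^ β) * ωd)
                * (ENNReal.ofReal ((1 + c''/(δ/β - 1)) * (r/m) ^ β) * lam (Set.Ioi (r/m)))
              = (ENNReal.ofReal t * ENNReal.ofReal (1 + c''/(δ/β - 1))
                  * (ENNReal.ofReal ((Cg * t / r) ^ β) * ENNReal.ofReal ((r/m) ^ β)))
                  * (ωd * lam (Set.Ioi (r/m))) := by
                rw [ENNReal.ofReal_mul hterm.le]
                ring
            _ = ENNReal.ofReal Kb * (ωd * lam (Set.Ioi (r/m))) := by
                rw [← ENNReal.ofReal_mul (by positivity : (0:ℝ) ≤ (Cg * t / r) ^ β),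
                  hprod, hsplitKb]
        · exact hlowval
  obtain ⟨K, hKtop, hKev⟩ := hcmp
  have h1Ktop : (1 + K) ≠ ⊤ := by
    rw [ENNReal.add_ne_top]
    exact ⟨ENNReal.one_ne_top, hKtop⟩
  refine ⟨max 1 (1 + K).toReal, le_max_left _ _, ?_⟩
  filter_upwards [hKev, Filter.eventually_ge_atTop (1:ℝ)] with r hKr hr1
  have hC1 : (1:ℝ) ≤ max 1 (1 + K).toReal := le_max_left _ _
  have hC0 : (0:ℝ) < max 1 (1 + K).toReal := lt_of_lt_of_le one_pos hC1
  have hmaxr : max r (if ((d:ℝ) < α) then 1 else 0) = r :=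
    max_eq_left (by split_ifs <;> linarith)
  have hsub0 : etaZeroBar d α t g lam r ≤ etaBar d α t g lam r := by
    refine measure_mono (fun q hq => ?_)
    exact lt_of_le_of_lt (le_max_left _ _) hq.2
  have hsplit : etaBar d α t g lam r ≤ etaZeroBar d α t g lam r
      + ν ({q : ℝ × EuclideanSpace ℝ (Fin d) × ℝ |
            1/2 < ‖q.2.1‖ ∧ r < pker d α g q.1 q.2.1 * q.2.2} ∩ box) := by
    rw [hEB r, hEZ r]
    refine le_trans (measure_mono ?_) (measure_union_le _ _)
    intro q hq
    obtain ⟨hq1, hq2⟩ := hq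
    rcases le_or_gt ‖q.2.1‖ (1/2) with hn | hn
    · left
      exact ⟨⟨hn, by rw [hmaxr]; exact hq1⟩, hq2⟩
    · right
      exact ⟨⟨hn, hq1⟩, hq2⟩
  have hfull : etaBar d α t g lam r ≤ (1 + K) * etaZeroBar d α t g lam r := by
    refine le_trans hsplit ?_
    calc etaZeroBar d α t g lam r + ν ({q : ℝ × EuclideanSpace ℝ (Fin d) × ℝ |
            1/2 < ‖q.2.1‖ ∧ r < pker d α g q.1 q.2.1 * q.2.2} ∩ box)
        ≤ etaZeroBar d α t g lam r + K * etaZeroBar d α t g lam r := add_le_add le_rfl hKr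
      _ = (1 + K) * etaZeroBar d α t g lam r := by rw [add_mul, one_mul]
  by_cases htop : etaBar d α t g lam r = ⊤
  · have hztop : etaZeroBar d α t g lam r = ⊤ := by
      by_contra hne
      have hfin : (1 + K) * etaZeroBar d α t g lam r ≠ ⊤ := ENNReal.mul_ne_top h1Ktop hne
      exact hfin (top_le_iff.1 (htop ▸ hfull))
    rw [htop, hztop, ENNReal.toReal_top]
    constructor <;> simp
  · have hzfin : etaZeroBar d α t g lam r ≠ ⊤ :=
      fun h => htop (top_le_iff.1 (h ▸ hsub0))
    constructor
    · have h2 : (etaBar d α t g lam r).toReal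
          ≤ ((1 + K) * etaZeroBar d α t g lam r).toReal :=
        ENNReal.toReal_mono (ENNReal.mul_ne_top h1Ktop hzfin) hfull
      rw [ENNReal.toReal_mul] at h2
      have h3 : (1 + K).toReal ≤ max 1 (1 + K).toReal := le_max_right _ _
      have h4 : (etaBar d α t g lam r).toReal
          ≤ max 1 (1 + K).toReal * (etaZeroBar d α t g lam r).toReal :=
        le_trans h2 (mul_le_mul_of_nonneg_right h3 ENNReal.toReal_nonneg)
      rw [inv_mul_le_iff₀ hC0]
      exact h4
    · have h1 : (etaZeroBar d α t g lam r).toReal ≤ (etaBar d α t g lam r).toReal :=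
        ENNReal.toReal_mono htop hsub0
      nlinarith [ENNReal.toReal_nonneg (a := etaBar d α t g lam r)]
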